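/- The Euclidean distance in ℝ³ between the segment from (0,0,0) to (1,2,2) and the segment from (2,1,2) to (0,2,1) equals 1/(5√2). -/

import Mathlib

/-- The infimum of Euclidean distances between points of two sets. -/
noncomputable def setDist {E : Type*} [PseudoMetricSpace E] (P Q : Set E) : ℝ :=
  sInf (Set.image2 dist P Q)

theorem stmt_14 :
    setDist (segment ℝ ((WithLp.equiv 2 (Fin 3 → ℝ)).symm ![0, 0, 0]) ((WithLp.equiv 2 (Fin 3 → ℝ)).symm ![1, 2, 2]))
        (segment ℝ ((WithLp.equiv 2 (Fin 3 → ℝ)).symm ![2, 1, 2]) ((WithLp.equiv 2 (Fin 3 → ℝ)).symm ![0, 2, 1])) =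
      1 / (5 * Real.sqrt 2) := by
  have h50 : (5 : ℝ) * Real.sqrt 2 = Real.sqrt 50 := by
    rw [show (50:ℝ) = 5^2*2 by norm_num, Real.sqrt_mul (by positivity), Real.sqrt_sq (by norm_num)]
  have hcpos : (0:ℝ) < 1 / (5 * Real.sqrt 2) := by positivity
  have hcsq : (1 / (5 * Real.sqrt 2))^2 = 1/50 := by
    rw [div_pow, mul_pow, Real.sq_sqrt (by norm_num : (0:ℝ) ≤ 2)]; norm_num
  apply IsLeast.csInf_eq
  constructor
  · -- membership: achieved at s = 19/25, t = 29/50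
    refine Set.mem_image2.2 ⟨(WithLp.equiv 2 (Fin 3 → ℝ)).symm ![19/25, 38/25, 38/25], ?_,
      (WithLp.equiv 2 (Fin 3 → ℝ)).symm ![21/25, 79/50, 71/50], ?_, ?_⟩
    · refine ⟨6/25, 19/25, by norm_num, by norm_num, by norm_num, ?_⟩
      ext i
      fin_cases i <;>
        simp [WithLp.equiv_symm_apply, PiLp.toLp_apply, PiLp.add_apply, PiLp.smul_apply] <;> norm_num
    · refine ⟨21/50, 29/50, by norm_num, by norm_num, by norm_num, ?_⟩
      ext i
      fin_cases i <;>
        simp [WithLp.equiv_symm_apply, PiLp.toLp_apply, PiLp.add_apply, PiLp.smul_apply] <;> norm_num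
    · rw [EuclideanSpace.dist_eq]
      simp only [WithLp.equiv_symm_apply, PiLp.toLp_apply, Fin.sum_univ_three, Real.dist_eq]
      rw [show ((|(![(19:ℝ)/25, 38/25, 38/25]) 0 - (![(21:ℝ)/25, 79/50, 71/50]) 0|)^2 +
          (|(![(19:ℝ)/25, 38/25, 38/25]) 1 - (![(21:ℝ)/25, 79/50, 71/50]) 1|)^2 +
          (|(![(19:ℝ)/25, 38/25, 38/25]) 2 - (![(21:ℝ)/25, 79/50, 71/50]) 2|)^2 : ℝ) = 1/50 by
        simp [sq_abs]; norm_num]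
      rw [show (1:ℝ)/50 = (1/(5*Real.sqrt 2))^2 by rw [hcsq], Real.sqrt_sq hcpos.le]
  · rintro r ⟨x, hx, y, hy, rfl⟩
    obtain ⟨a, b, ha, hb, hab, rfl⟩ := hx
    obtain ⟨a', b', ha', hb', hab', rfl⟩ := hy
    rw [EuclideanSpace.dist_eq]
    rw [show (1:ℝ) / (5 * Real.sqrt 2) = Real.sqrt (1/50) by
      rw [show (1:ℝ)/50 = (1/(5*Real.sqrt 2))^2 by rw [hcsq], Real.sqrt_sq hcpos.le]]
    apply Real.sqrt_le_sqrt
    simp only [Fin.sum_univ_three, Real.dist_eq, PiLp.add_apply, PiLp.smul_apply,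
      WithLp.equiv_symm_apply, PiLp.toLp_apply, sq_abs, smul_eq_mul]
    simp only [Matrix.cons_val_zero, Matrix.cons_val_one, Matrix.head_cons,
      Matrix.cons_val_two, Matrix.tail_cons]
    have h1 : a = 1 - b := by linarith
    have h2 : a' = 1 - b' := by linarith
    subst h1 h2
    nlinarith [sq_nonneg (9*b + 2*b' - 8), sq_nonneg (50*b' - 29), sq_nonneg (b - b')]
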